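/- Let a, b ∈ ℝ^n be nonnegative nonincreasing vectors with a_1 > b_1 and ∑_{i=1}^n a_i = ∑_{i=1}^n b_i, and ∑_{i=1}^k b_i ≤ ∑_{i=1}^k a_i for all k. Then there exists an index k ≤ n such that (1/k)∑_{i=1}^k a_i ≤ b_1 < (1/(k-1))∑_{i=1}^{k-1} a_i. -/

import Mathlib

/-- existence of the index `k` with
`(1/k)∑_{i=1}^k a_i ≤ b_1 < (1/(k-1))∑_{i=1}^{k-1} a_i`.
Vectors in ℝ^n are modelled as functions `ℕ → ℝ` whose first `n` entries matter. -/
theorem exists_index_average_le {n : ℕ} (hn : 0 < n) (a b : ℕ → ℝ)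
    (ha0 : ∀ i < n, 0 ≤ a i) (hb0 : ∀ i < n, 0 ≤ b i)
    (haA : ∀ i j, i ≤ j → j < n → a j ≤ a i)
    (hbA : ∀ i j, i ≤ j → j < n → b j ≤ b i)
    (hmaj : ∀ k ≤ n, ∑ i ∈ Finset.range k, b i ≤ ∑ i ∈ Finset.range k, a i)
    (hsum : ∑ i ∈ Finset.range n, a i = ∑ i ∈ Finset.range n, b i)
    (h1 : b 0 < a 0) :
    ∃ k, 2 ≤ k ∧ k ≤ n ∧
      (1 / (k : ℝ)) * ∑ i ∈ Finset.range k, a i ≤ b 0 ∧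
      b 0 < (1 / ((k : ℝ) - 1)) * ∑ i ∈ Finset.range (k - 1), a i := by
  -- n ≥ 2
  have hn2 : 2 ≤ n := by
    by_contra h
    interval_cases n
    · simp [Finset.sum_range_one] at hsum
      linarith
  have Q : ℕ → Prop := fun k => 2 ≤ k ∧ ∑ i ∈ Finset.range k, a i ≤ (k : ℝ) * b 0
  have hQn : 2 ≤ n ∧ ∑ i ∈ Finset.range n, a i ≤ (n : ℝ) * b 0 := by
    refine ⟨hn2, ?_⟩
    rw [hsum]
    calc ∑ i ∈ Finset.range n, b i ≤ ∑ i ∈ Finset.range n, b 0 := by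
          apply Finset.sum_le_sum
          intro i hi
          exact hbA 0 i (Nat.zero_le i) (Finset.mem_range.mp hi)
      _ = (n : ℝ) * b 0 := by simp [mul_comm]
  classical
  let P : ℕ → Prop := fun k => 2 ≤ k ∧ ∑ i ∈ Finset.range k, a i ≤ (k : ℝ) * b 0
  have hex : ∃ k, P k := ⟨n, hQn⟩
  set k := Nat.find hex with hk
  have hPk : P k := Nat.find_spec hex
  obtain ⟨hk2, hkle⟩ := hPk
  have hkn : k ≤ n := Nat.find_le hQn
  refine ⟨k, hk2, hkn, ?_, ?_⟩
  · have hkpos : (0 : ℝ) < (k : ℝ) := by positivity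
    rw [div_mul_eq_mul_div, one_mul, div_le_iff₀ hkpos]
    linarith [hkle]
  · have hprev : (↑(k - 1) : ℝ) * b 0 < ∑ i ∈ Finset.range (k - 1), a i := by
      rcases eq_or_lt_of_le hk2 with h2 | h2
      · -- k = 2, k-1 = 1
        rw [← h2]
        simpa [Finset.sum_range_one] using h1
      · have hk1 : ¬ P (k - 1) := Nat.find_min hex (by omega)
        have h21 : 2 ≤ k - 1 := by omega
        simp only [P, not_and, not_le] at hk1
        exact hk1 h21
    have hpos : (0 : ℝ) < (k : ℝ) - 1 := by
      have : (1 : ℝ) < (k : ℝ) := by exact_mod_cast (by omega : 1 < k)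
      linarith
    have hcast : (↑(k - 1) : ℝ) = (k : ℝ) - 1 := by
      have : 1 ≤ k := by omega
      push_cast [Nat.cast_sub this]
      ring
    rw [div_mul_eq_mul_div, one_mul, lt_div_iff₀ hpos]
    rw [hcast] at hprev
    linarith
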